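/- Let λ ∈ K_v^× with v(λ − 1) > 0 and such that λ is not a root of unity, and for i ≥ 0 set w_i := v(λ^{ℓ^i} − 1). Then the sequence (w_i) is strictly increasing, there is a smallest integer κ ≥ 0 with w_κ > e/(ℓ−1), and this κ satisfies ℓ^κ ≤ ℓe/(ℓ−1); in particular κ ≤ ⌊log(2e)/log ℓ⌋. -/

import Mathlib

section aux
variable {K : Type*} [Field K] (v : K → WithTop ℤ)
  (hv0 : ∀ x : K, v x = ⊤ ↔ x = 0)
  (hvmul : ∀ x y : K, v (x * y) = v x + v y)
  (hvadd : ∀ x y : K, min (v x) (v y) ≤ v (x + y))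
  (hv1 : v 1 = 0)

include hv0 hvadd in
lemma vsum_ge {ι : Type*} (c : WithTop ℤ) (s : Finset ι) (f : ι → K)
    (h : ∀ i ∈ s, c ≤ v (f i)) : c ≤ v (∑ i ∈ s, f i) := by
  induction s using Finset.cons_induction with
  | empty => simp [(hv0 0).mpr rfl]
  | cons a s ha ih =>
      rw [Finset.sum_cons]
      refine le_trans ?_ (hvadd _ _)
      exact le_min (h a (Finset.mem_cons_self a s))
        (ih fun i hi => h i (Finset.mem_cons_of_mem hi))

include hvmul hv1 in
lemma vpow (x : K) (n : ℕ) : v (x ^ n) = n • v x := by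
  induction n with
  | zero => simpa using hv1
  | succ n ih => rw [pow_succ, hvmul, ih, succ_nsmul]

include hv0 hvadd hv1 in
lemma vnat_nonneg (n : ℕ) : (0 : WithTop ℤ) ≤ v (n : K) := by
  induction n with
  | zero => simp [(hv0 0).mpr rfl]
  | succ n ih =>
      push_cast
      refine le_trans ?_ (hvadd _ _)
      simp [hv1, ih]

include hv0 hvmul hvadd hv1 in
lemma vkey (ℓ : ℕ) (hℓ : Nat.Prime ℓ) (e : ℕ)
    (hvℓ : v (ℓ : K) = ((e : ℤ) : WithTop ℤ))
    (x : K) (w : ℤ) (hw : 0 < w) (hx : v (x - 1) = (w : WithTop ℤ)) :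
    ((min ((e : ℤ) + w) (ℓ * w) : ℤ) : WithTop ℤ) ≤ v (x ^ ℓ - 1) := by
  set μ := x - 1 with hμ
  have hxm : x = μ + 1 := by ring
  have hexp : x ^ ℓ - 1 = ∑ k ∈ Finset.range ℓ, μ ^ (k + 1) * (ℓ.choose (k + 1) : K) := by
    rw [hxm, add_pow]
    rw [Finset.sum_range_succ' (fun k => μ ^ k * 1 ^ (ℓ - k) * (ℓ.choose k : K)) ℓ]
    simp [Finset.sum_congr]
  rw [hexp, WithTop.coe_min]
  apply vsum_ge v hv0 hvadd
  intro k hk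
  rw [Finset.mem_range] at hk
  have hterm : v (μ ^ (k + 1) * (ℓ.choose (k + 1) : K)) =
      (((k + 1 : ℕ) * w : ℤ) : WithTop ℤ) + v ((ℓ.choose (k + 1) : K)) := by
    rw [hvmul, vpow v hvmul hv1, hx]
    norm_cast
  rw [hterm]
  rcases eq_or_lt_of_le (Nat.succ_le_of_lt hk) with heq | hlt
  · -- k + 1 = ℓ
    rw [← heq]
    simp only [Nat.choose_self, Nat.cast_one, hv1, add_zero]
    refine le_trans (min_le_right _ _) ?_
    norm_cast
  · -- k + 1 < ℓ : ℓ ∣ choose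
    have hdvd : ℓ ∣ ℓ.choose (k + 1) := hℓ.dvd_choose_self (Nat.succ_ne_zero k) hlt
    obtain ⟨m, hm⟩ := hdvd
    have hvc : ((e : ℤ) : WithTop ℤ) ≤ v ((ℓ.choose (k + 1) : K)) := by
      rw [hm]
      push_cast
      rw [hvmul, hvℓ]
      have := vnat_nonneg v hv0 hvadd hv1 (K := K) m
      calc ((e : ℤ) : WithTop ℤ) = (e : ℤ) + 0 := by rw [add_zero]
        _ ≤ ((e : ℤ) : WithTop ℤ) + v (m : K) := add_le_add le_rfl this
    refine le_trans (min_le_left _ _) ?_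
    have h1 : ((e : ℤ) + w : ℤ) = w + (e : ℤ) := by ring
    have h2 : (w : WithTop ℤ) ≤ (((k + 1 : ℕ) * w : ℤ) : WithTop ℤ) := by
      rw [WithTop.coe_le_coe]
      have hk1 : (1 : ℤ) ≤ ((k + 1 : ℕ) : ℤ) := by exact_mod_cast Nat.succ_le_succ (Nat.zero_le k)
      nlinarith
    calc (((e : ℤ) + w : ℤ) : WithTop ℤ) = (w : WithTop ℤ) + ((e : ℤ) : WithTop ℤ) := by
          rw [h1]; push_cast; rfl
      _ ≤ _ := add_le_add h2 hvc

end aux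



/-- Let `K_v` be a complete discretely valued field of characteristic `0` with perfect
residue field of characteristic `ℓ` (a prime), additive valuation `v` normalized so that
`v(K_v^×) = ℤ` (with `v(0) = ⊤`), and absolute ramification index `e = v(ℓ)`.  Let
`λ ∈ K_v^×` with `v(λ − 1) > 0` that is not a root of unity, and set
`w_i := v(λ^(ℓ^i) − 1)` (a finite integer).  Then `(w_i)` is strictly increasing, there
is a smallest integer `κ ≥ 0` with `w_κ > e/(ℓ−1)`, and this `κ` satisfies
`ℓ^κ ≤ ℓe/(ℓ−1)`; in particular `κ ≤ ⌊log(2e)/log ℓ⌋`. -/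
theorem valuation_jump_kappa
    (K : Type*) [Field K] [CharZero K]
    (ℓ : ℕ) (hℓ : Nat.Prime ℓ) (e : ℕ) (he : 1 ≤ e)
    (v : K → WithTop ℤ)
    (hv0 : ∀ x : K, v x = ⊤ ↔ x = 0)
    (hvmul : ∀ x y : K, v (x * y) = v x + v y)
    (hvadd : ∀ x y : K, min (v x) (v y) ≤ v (x + y))
    (hv1 : v 1 = 0)
    (hsurj : ∀ m : ℤ, ∃ x : K, v x = (m : WithTop ℤ))
    (hvℓ : v (ℓ : K) = ((e : ℤ) : WithTop ℤ))
    (lam : K) (hlam : lam ≠ 0) (hpos : 0 < v (lam - 1))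
    (htors : ∀ n : ℕ, 0 < n → lam ^ n ≠ 1) :
    ∃ w : ℕ → ℤ,
      (∀ i : ℕ, v (lam ^ ℓ ^ i - 1) = ((w i : ℤ) : WithTop ℤ)) ∧
      StrictMono w ∧
      ∃ κ : ℕ,
        ((e : ℝ) / ((ℓ : ℝ) - 1) < (w κ : ℝ) ∧
          ∀ j < κ, (w j : ℝ) ≤ (e : ℝ) / ((ℓ : ℝ) - 1)) ∧
        (ℓ : ℝ) ^ κ ≤ (ℓ : ℝ) * e / ((ℓ : ℝ) - 1) ∧
        (κ : ℤ) ≤ ⌊Real.log (2 * e) / Real.log ℓ⌋ := by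
  classical
  have hℓ2 : 2 ≤ ℓ := hℓ.two_le
  have hℓR : (2 : ℝ) ≤ (ℓ : ℝ) := by exact_mod_cast hℓ2
  have hℓ1 : (0 : ℝ) < (ℓ : ℝ) - 1 := by linarith
  have heR : (1 : ℝ) ≤ (e : ℝ) := by exact_mod_cast he
  have hne : ∀ i : ℕ, lam ^ ℓ ^ i - 1 ≠ 0 := fun i =>
    sub_ne_zero.mpr (htors (ℓ ^ i) (pow_pos hℓ.pos i))
  set w : ℕ → ℤ := fun i => (v (lam ^ ℓ ^ i - 1)).untopD 0 with hwdef
  have hw : ∀ i, v (lam ^ ℓ ^ i - 1) = ((w i : ℤ) : WithTop ℤ) := by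
    intro i
    have hnt : v (lam ^ ℓ ^ i - 1) ≠ ⊤ := fun h => hne i ((hv0 _).mp h)
    obtain ⟨m, hm⟩ := WithTop.ne_top_iff_exists.mp hnt
    rw [← hm]
    simp [hwdef, ← hm]
  -- step inequality
  have hkey : ∀ i, 0 < w i → min ((e : ℤ) + w i) ((ℓ : ℤ) * w i) ≤ w (i + 1) := by
    intro i hi
    have h := vkey v hv0 hvmul hvadd hv1 ℓ hℓ e hvℓ (lam ^ ℓ ^ i) (w i) hi (hw i)
    rw [show (lam ^ ℓ ^ i) ^ ℓ = lam ^ ℓ ^ (i + 1) by rw [← pow_mul, ← pow_succ],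
      hw (i + 1)] at h
    exact_mod_cast h
  have hw0 : 0 < w 0 := by
    have h0 : v (lam ^ ℓ ^ 0 - 1) = v (lam - 1) := by norm_num
    rw [hw 0] at h0
    rw [← h0] at hpos
    exact_mod_cast hpos
  have hwpos : ∀ i, 0 < w i := by
    intro i
    induction i with
    | zero => exact hw0
    | succ n ih =>
        refine lt_of_lt_of_le (lt_min ?_ ?_) (hkey n ih)
        · have h1 : (1 : ℤ) ≤ (e : ℤ) := by exact_mod_cast he
          linarith
        · have h2 : (2 : ℤ) ≤ (ℓ : ℤ) := by exact_mod_cast hℓ2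
          nlinarith
  have hmono : StrictMono w := by
    apply strictMono_nat_of_lt_succ
    intro n
    refine lt_of_lt_of_le ?_ (hkey n (hwpos n))
    have h1 : (1 : ℤ) ≤ (e : ℤ) := by exact_mod_cast he
    have h2 : (2 : ℤ) ≤ (ℓ : ℤ) := by exact_mod_cast hℓ2
    have := hwpos n
    refine lt_min (by linarith) (by nlinarith)
  have hgrow : ∀ i : ℕ, w 0 + i ≤ w i := by
    intro i
    induction i with
    | zero => simp
    | succ n ih =>
        have := Int.add_one_le_iff.mpr (hmono (Nat.lt_succ_self n))
        push_cast
        push_cast at ih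
        linarith
  -- existence of κ
  have hex : ∃ i, (e : ℝ) / ((ℓ : ℝ) - 1) < (w i : ℝ) := by
    refine ⟨e, ?_⟩
    have h1 : w 0 + (e : ℤ) ≤ w e := hgrow e
    have h2 : (1 : ℤ) ≤ w 0 := hw0
    have h3 : ((e : ℝ)) + 1 ≤ (w e : ℝ) := by
      have : (e : ℤ) + 1 ≤ w e := by linarith
      exact_mod_cast this
    have hE : (e : ℝ) / ((ℓ : ℝ) - 1) ≤ e := by
      rw [div_le_iff₀ hℓ1]; nlinarith
    linarith
  set κ := Nat.find hex with hκdef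
  have hspec : (e : ℝ) / ((ℓ : ℝ) - 1) < (w κ : ℝ) := Nat.find_spec hex
  have hmin : ∀ j < κ, (w j : ℝ) ≤ (e : ℝ) / ((ℓ : ℝ) - 1) := fun j hj =>
    not_lt.mp (Nat.find_min hex hj)
  have hbound : (ℓ : ℝ) ^ κ ≤ (ℓ : ℝ) * e / ((ℓ : ℝ) - 1) := by
    rcases Nat.eq_zero_or_pos κ with h0 | hκpos
    · rw [h0, pow_zero, le_div_iff₀ hℓ1]
      nlinarith
    · obtain ⟨m, hm⟩ := Nat.exists_eq_succ_of_ne_zero (Nat.pos_iff_ne_zero.mp hκpos)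
      rw [hm]
      -- for i ≤ m : ℓ^i ≤ w i
      have hgeom : ∀ i ≤ m, (ℓ : ℤ) ^ i ≤ w i := by
        intro i hi
        induction i with
        | zero => simpa using (show (1 : ℤ) ≤ w 0 from hw0)
        | succ n ih =>
            have hn : n ≤ m := Nat.le_of_succ_le hi
            have ihn := ih hn
            have hnκ : n < m + 1 := Nat.lt_succ_of_le hn
            have hle : (w n : ℝ) ≤ (e : ℝ) / ((ℓ : ℝ) - 1) := hmin n (by omega)
            have hleZ : ((ℓ : ℤ) - 1) * w n ≤ (e : ℤ) := by
              have : ((ℓ : ℝ) - 1) * (w n : ℝ) ≤ (e : ℝ) := by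
                rw [← le_div_iff₀' hℓ1]; exact hle
              exact_mod_cast this
            have hminℓ : min ((e : ℤ) + w n) ((ℓ : ℤ) * w n) = (ℓ : ℤ) * w n := by
              apply min_eq_right
              nlinarith
            have := hkey n (hwpos n)
            rw [hminℓ] at this
            have hℓZ : (0 : ℤ) ≤ (ℓ : ℤ) := by positivity
            calc (ℓ : ℤ) ^ (n + 1) = (ℓ : ℤ) * (ℓ : ℤ) ^ n := by ring
              _ ≤ (ℓ : ℤ) * w n := by
                  apply mul_le_mul_of_nonneg_left ihn hℓZ
              _ ≤ w (n + 1) := this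
      have h1 : (ℓ : ℝ) ^ m ≤ (w m : ℝ) := by exact_mod_cast hgeom m le_rfl
      have h2 : (w m : ℝ) ≤ (e : ℝ) / ((ℓ : ℝ) - 1) := hmin m (by omega)
      have hℓ0 : (0 : ℝ) ≤ (ℓ : ℝ) := by positivity
      calc (ℓ : ℝ) ^ (m + 1) = (ℓ : ℝ) * (ℓ : ℝ) ^ m := by ring
        _ ≤ (ℓ : ℝ) * ((e : ℝ) / ((ℓ : ℝ) - 1)) :=
            mul_le_mul_of_nonneg_left (h1.trans h2) hℓ0
        _ = (ℓ : ℝ) * e / ((ℓ : ℝ) - 1) := by ring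
  refine ⟨w, hw, hmono, κ, ⟨hspec, hmin⟩, hbound, ?_⟩
  have h2e : (ℓ : ℝ) * e / ((ℓ : ℝ) - 1) ≤ 2 * e := by
    rw [div_le_iff₀ hℓ1]; nlinarith
  have hpow2e : (ℓ : ℝ) ^ κ ≤ 2 * e := hbound.trans h2e
  have hlogℓ : 0 < Real.log ℓ := Real.log_pos (by exact_mod_cast hℓ.one_lt)
  rw [Int.le_floor]
  push_cast
  rw [le_div_iff₀ hlogℓ, ← Real.log_pow]
  have hppos : (0 : ℝ) < (ℓ : ℝ) ^ κ := by positivity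
  calc Real.log ((ℓ : ℝ) ^ κ) ≤ Real.log (2 * e) := by
        apply Real.log_le_log hppos hpow2e
    _ = Real.log (2 * e) := rfl
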